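/- Let μ be a probability measure on Γ_X with correlation functions κ_μ^m (with respect to θ) existing and bounded for all m = 1,…,n. Then μ ∈ M_θ^n(Γ_X): for every f ∈ ⋂_{1≤q≤n} L^q(X,θ), ∫ |⟨f,γ⟩|^n dμ(γ) < ∞. -/

import Mathlib

open MeasureTheory ENNReal
open scoped NNReal

private lemma lintegral_pi_prod_aux {X : Type*} [MeasurableSpace X] (θ : Measure X)
    [SigmaFinite θ] :
    ∀ (m : ℕ) (h : Fin m → X → ℝ≥0∞), (∀ j, Measurable (h j)) →
      ∫⁻ w, ∏ j, h j (w j) ∂(Measure.pi fun _ : Fin m => θ) = ∏ j, ∫⁻ x, h j x ∂θ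
  | 0, h, hh => by simp [lintegral_const, Measure.pi_univ]
  | (m+1), h, hh => by
    have hmp := measurePreserving_piFinSuccAbove (fun _ : Fin (m+1) => θ) 0
    have hF : Measurable (fun z : X × (Fin m → X) =>
        h 0 z.1 * ∏ j : Fin m, h j.succ (z.2 j)) := by
      refine ((hh 0).comp measurable_fst).mul ?_
      exact Finset.measurable_prod _ fun j _ =>
        (hh j.succ).comp ((measurable_pi_apply j).comp measurable_snd)
    calc ∫⁻ w, ∏ j, h j (w j) ∂(Measure.pi fun _ : Fin (m+1) => θ)
        = ∫⁻ w, (fun z : X × (Fin m → X) => h 0 z.1 * ∏ j : Fin m, h j.succ (z.2 j))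
            (MeasurableEquiv.piFinSuccAbove (fun _ : Fin (m+1) => X) 0 w)
            ∂(Measure.pi fun _ : Fin (m+1) => θ) := by
          refine lintegral_congr fun w => ?_
          rw [Fin.prod_univ_succ]
          simp [MeasurableEquiv.piFinSuccAbove, Fin.insertNthEquiv, Fin.tail]
      _ = ∫⁻ z, h 0 z.1 * ∏ j : Fin m, h j.succ (z.2 j)
            ∂((θ).prod (Measure.pi fun _ : Fin m => θ)) := hmp.lintegral_comp hF
      _ = (∫⁻ x, h 0 x ∂θ) * ∫⁻ w, ∏ j : Fin m, h j.succ (w j)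
            ∂(Measure.pi fun _ : Fin m => θ) := by
          refine lintegral_prod_mul (f := h 0)
            (g := fun w : Fin m → X => ∏ j : Fin m, h j.succ (w j)) (hh 0).aemeasurable ?_
          exact (Finset.measurable_prod _ fun j _ =>
            (hh j.succ).comp (measurable_pi_apply j)).aemeasurable
      _ = ∏ j, ∫⁻ x, h j x ∂θ := by
          rw [lintegral_pi_prod_aux θ m (fun j => h j.succ) (fun j => hh j.succ),
            Fin.prod_univ_succ]

private lemma pow_tsum_le_aux (n : ℕ) (a : ℕ → ℝ≥0∞) :
    (∑' k, a k) ^ n ≤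
      ∑ m : Fin (n+1), ∑' v : {v : Fin (m:ℕ) → ℕ // Function.Injective v},
        ∑ p : {p : Fin n → Fin (m:ℕ) // Function.Surjective p},
          ∏ i, a (v.1 (p.1 i)) := by
  classical
  have tsum_pow_eq : ∀ n : ℕ, (∑' k, a k) ^ n = ∑' u : Fin n → ℕ, ∏ i, a (u i) := by
    intro n
    induction n with
    | zero => simp [tsum_fintype]
    | succ n ih =>
      calc (∑' k, a k) ^ (n+1)
          = ∑' k, a k * ∑' u : Fin n → ℕ, ∏ i, a (u i) := by
            rw [ENNReal.tsum_mul_right, ← ih, pow_succ']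
        _ = ∑' k, ∑' u : Fin n → ℕ, a k * ∏ i, a (u i) := by
            simp_rw [ENNReal.tsum_mul_left]
        _ = ∑' p : ℕ × (Fin n → ℕ), a p.1 * ∏ i, a (p.2 i) :=
            (ENNReal.tsum_prod' (f := fun p : ℕ × (Fin n → ℕ) => a p.1 * ∏ i, a (p.2 i))).symm
        _ = ∑' u : Fin (n+1) → ℕ, ∏ i, a (u i) := by
            rw [← (Fin.consEquiv (fun _ : Fin (n+1) => ℕ)).tsum_eq (fun u => ∏ i, a (u i))]
            refine tsum_congr fun p => ?_
            rw [Fin.prod_univ_succ]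
            simp [Fin.consEquiv]
  set B := (Σ m : Fin (n+1), {v : Fin (m:ℕ) → ℕ // Function.Injective v} ×
      {p : Fin n → Fin (m:ℕ) // Function.Surjective p}) with hB
  set g : B → ℝ≥0∞ := fun b => ∏ i, a (b.2.1.1 (b.2.2.1 i)) with hg
  have hcard : ∀ u : Fin n → ℕ, (Finset.image u Finset.univ).card < n + 1 := fun u =>
    Nat.lt_succ_of_le (le_trans Finset.card_image_le (by simp))
  have hmem : ∀ (u : Fin n → ℕ) (i : Fin n), u i ∈ Finset.image u Finset.univ := fun u i =>
    Finset.mem_image_of_mem u (Finset.mem_univ i)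
  set ι : (Fin n → ℕ) → B := fun u =>
    ⟨⟨(Finset.image u Finset.univ).card, hcard u⟩,
      ⟨fun i => ((Finset.image u Finset.univ).orderIsoOfFin rfl i : ℕ),
        fun i j hij => (Finset.image u Finset.univ).orderIsoOfFin rfl |>.injective
          (Subtype.ext hij)⟩,
      ⟨fun i => ((Finset.image u Finset.univ).orderIsoOfFin rfl).symm ⟨u i, hmem u i⟩,
        by
          intro j
          have hy : (((Finset.image u Finset.univ).orderIsoOfFin rfl) j : ℕ) ∈
              Finset.image u Finset.univ :=
            (((Finset.image u Finset.univ).orderIsoOfFin rfl) j).2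
          obtain ⟨i, -, hi⟩ := Finset.mem_image.1 hy
          refine ⟨i, ?_⟩
          have : (⟨u i, hmem u i⟩ : {x // x ∈ Finset.image u Finset.univ}) =
              ((Finset.image u Finset.univ).orderIsoOfFin rfl) j := Subtype.ext hi
          simp only [this, OrderIso.symm_apply_apply]⟩⟩
    with hι
  have hval : ∀ (u : Fin n → ℕ) (i : Fin n), (ι u).2.1.1 ((ι u).2.2.1 i) = u i := by
    intro u i
    exact congrArg Subtype.val (OrderIso.apply_symm_apply _ _)
  have hinj : Function.Injective ι := by
    intro u u' h
    funext i
    rw [← hval u i, h, hval u' i]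
  calc (∑' k, a k) ^ n = ∑' u : Fin n → ℕ, ∏ i, a (u i) := tsum_pow_eq n
    _ = ∑' u : Fin n → ℕ, g (ι u) := by
        refine tsum_congr fun u => ?_
        exact (Finset.prod_congr rfl fun i _ => by rw [hval u i]).symm
    _ ≤ ∑' b : B, g b := ENNReal.tsum_comp_le_tsum_of_injective hinj g
    _ = ∑' m : Fin (n+1), ∑' x, g ⟨m, x⟩ := ENNReal.tsum_sigma' g
    _ = ∑ m : Fin (n+1), ∑' x, g ⟨m, x⟩ := tsum_fintype _
    _ = ∑ m : Fin (n+1), ∑' v : {v : Fin (m:ℕ) → ℕ // Function.Injective v},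
          ∑ p : {p : Fin n → Fin (m:ℕ) // Function.Surjective p}, ∏ i, a (v.1 (p.1 i)) := by
        refine Finset.sum_congr rfl fun m _ => ?_
        rw [ENNReal.tsum_prod' (f := fun x : {v : Fin (m:ℕ) → ℕ // Function.Injective v} ×
          {p : Fin n → Fin (m:ℕ) // Function.Surjective p} => g ⟨m, x⟩)]
        exact tsum_congr fun v => tsum_fintype _

/-- Lemma B.3. If the correlation functions `κ_μ^m` of `μ` with respect
to `θ` exist and are bounded for all `m = 1,…,n`, then `μ ∈ M_θ^n(Γ_X)`: for every
`f ∈ ⋂_{1≤q≤n} L^q(X,θ)`, `∫ |⟨f,γ⟩|^n dμ(γ) < ∞`.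
Encoding: configurations indexed as `γ : ℕ → X`; the defining property of the correlation
function (for symmetric nonnegative `φ`) is stated via sums over injective index tuples,
`∫ Σ_{i : Fin m ↪ ℕ} φ(γ∘i) dμ = ∫_{X^m} φ·κ_μ^m dθ^{⊗m}`. -/
theorem momentClass_of_bounded_correlations
    {X : Type*} [TopologicalSpace X] [PolishSpace X] [MeasurableSpace X] [BorelSpace X]
    (θ : Measure X) [SigmaFinite θ]
    (μ : Measure (ℕ → X)) [IsProbabilityMeasure μ]
    (n : ℕ) (hn : 1 ≤ n)
    (κ : (m : ℕ) → (Fin m → X) → ℝ≥0∞)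
    (hκMeas : ∀ m, Measurable (κ m))
    (hκBdd : ∀ m, 1 ≤ m → m ≤ n → ∃ c : ℝ≥0∞, c < ⊤ ∧ ∀ v, κ m v ≤ c)
    (hcorr : ∀ m, 1 ≤ m → m ≤ n →
      ∀ φ : (Fin m → X) → ℝ≥0∞, Measurable φ →
        (∀ (v : Fin m → X) (σ : Equiv.Perm (Fin m)), φ (v ∘ σ) = φ v) →
        ∫⁻ γ, ∑' v : {v : Fin m → ℕ // Function.Injective v}, φ (γ ∘ (v : Fin m → ℕ)) ∂μ
          = ∫⁻ v, φ v * κ m v ∂(Measure.pi fun _ : Fin m => θ)) :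
    ∀ f : X → ℝ, Measurable f →
      (∀ q : ℝ, 1 ≤ q → q ≤ (n : ℝ) → ∫⁻ x, (‖f x‖₊ : ℝ≥0∞) ^ q ∂θ < ⊤) →
      ∫⁻ γ, (∑' k, (‖f (γ k)‖₊ : ℝ≥0∞)) ^ n ∂μ < ⊤ := by
  intro f hf hLp
  classical
  set G : X → ℝ≥0∞ := fun x => (‖f x‖₊ : ℝ≥0∞) with hG
  have hGmeas : Measurable G := hf.nnnorm.coe_nnreal_ennreal
  set φ : (m : ℕ) → (Fin m → X) → ℝ≥0∞ := fun m w =>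
    ∑ p : {p : Fin n → Fin m // Function.Surjective p}, ∏ i, G (w (p.1 i)) with hφ
  have hφmeas : ∀ m, Measurable (φ m) := by
    intro m
    refine Finset.measurable_sum _ fun p _ => ?_
    exact Finset.measurable_prod _ fun i _ => hGmeas.comp (measurable_pi_apply (p.1 i))
  have hφsym : ∀ m (w : Fin m → X) (σ : Equiv.Perm (Fin m)), φ m (w ∘ σ) = φ m w := by
    intro m w σ
    refine Fintype.sum_equiv
      ⟨fun q => ⟨σ ∘ q.1, σ.surjective.comp q.2⟩,
       fun q => ⟨σ.symm ∘ q.1, σ.symm.surjective.comp q.2⟩,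
       fun q => by ext i; simp, fun q => by ext i; simp⟩ _ _ (fun q => ?_)
    simp [Function.comp]
  have Tmeas : ∀ m : ℕ, Measurable (fun γ : ℕ → X =>
      ∑' v : {v : Fin m → ℕ // Function.Injective v}, φ m (γ ∘ (v : Fin m → ℕ))) := by
    intro m
    refine Measurable.ennreal_tsum fun v => ?_
    exact (hφmeas m).comp (measurable_pi_lambda _ fun i => measurable_pi_apply (v.1 i))
  have key : ∀ m : ℕ, m ≤ n →
      ∫⁻ γ, ∑' v : {v : Fin m → ℕ // Function.Injective v},
        φ m (γ ∘ (v : Fin m → ℕ)) ∂μ < ⊤ := by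
    intro m hmn
    rcases Nat.eq_zero_or_pos m with hm0 | hm1
    · subst hm0
      haveI : IsEmpty (Fin n → Fin 0) := ⟨fun p => (p ⟨0, hn⟩).elim0⟩
      have hzero : φ 0 = fun _ => 0 := by
        funext w
        rw [hφ]
        simp
      simp [hzero]
    · rw [hcorr m hm1 hmn (φ m) (hφmeas m) (hφsym m)]
      obtain ⟨c, hc, hcb⟩ := hκBdd m hm1 hmn
      have hb : ∫⁻ v, φ m v * κ m v ∂(Measure.pi fun _ : Fin m => θ)
          ≤ (∫⁻ v, φ m v ∂(Measure.pi fun _ : Fin m => θ)) * c := by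
        rw [← lintegral_mul_const c (hφmeas m)]
        exact lintegral_mono fun v => mul_le_mul_right (hcb v) _
      refine lt_of_le_of_lt hb (ENNReal.mul_lt_top ?_ hc)
      have hsum : ∫⁻ v, φ m v ∂(Measure.pi fun _ : Fin m => θ)
          = ∑ p : {p : Fin n → Fin m // Function.Surjective p},
              ∫⁻ v, ∏ i, G (v (p.1 i)) ∂(Measure.pi fun _ : Fin m => θ) := by
        rw [hφ]
        exact lintegral_finset_sum _ fun p _ =>
          Finset.measurable_prod _ fun i _ => hGmeas.comp (measurable_pi_apply (p.1 i))
      rw [hsum]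
      refine ENNReal.sum_lt_top.2 fun p _ => ?_
      have h1 : ∀ v : Fin m → X, ∏ i, G (v (p.1 i)) =
          ∏ j : Fin m, G (v j) ^ (Finset.univ.filter (fun i => p.1 i = j)).card := by
        intro v
        rw [Finset.prod_comp (fun j => G (v j)) p.1, Finset.image_univ_of_surjective p.2]
      simp_rw [h1]
      rw [lintegral_pi_prod_aux θ m
        (fun j x => G x ^ (Finset.univ.filter (fun i => p.1 i = j)).card)
        (fun j => hGmeas.pow_const _)]
      refine ENNReal.prod_lt_top fun j _ => ?_
      set cj := (Finset.univ.filter (fun i => p.1 i = j)).card with hcj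
      have hc1 : 1 ≤ cj := by
        obtain ⟨i, hi⟩ := p.2 j
        exact Finset.card_pos.2 ⟨i, Finset.mem_filter.2 ⟨Finset.mem_univ i, hi⟩⟩
      have hcn : cj ≤ n := le_trans (Finset.card_filter_le _ _) (by simp)
      have heq : ∫⁻ x, G x ^ cj ∂θ = ∫⁻ x, (‖f x‖₊ : ℝ≥0∞) ^ ((cj : ℕ) : ℝ) ∂θ := by
        refine lintegral_congr fun x => ?_
        rw [ENNReal.rpow_natCast, hG]
      rw [heq]
      exact hLp (cj : ℝ) (by exact_mod_cast hc1) (by exact_mod_cast hcn)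
  calc ∫⁻ γ, (∑' k, (‖f (γ k)‖₊ : ℝ≥0∞)) ^ n ∂μ
      ≤ ∫⁻ γ, ∑ m : Fin (n+1), ∑' v : {v : Fin (m:ℕ) → ℕ // Function.Injective v},
          φ (m : ℕ) (γ ∘ (v : Fin (m:ℕ) → ℕ)) ∂μ := by
        refine lintegral_mono fun γ => ?_
        exact pow_tsum_le_aux n (fun k => (‖f (γ k)‖₊ : ℝ≥0∞))
    _ = ∑ m : Fin (n+1), ∫⁻ γ, ∑' v : {v : Fin (m:ℕ) → ℕ // Function.Injective v},
          φ (m : ℕ) (γ ∘ (v : Fin (m:ℕ) → ℕ)) ∂μ :=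
        lintegral_finset_sum _ fun m _ => Tmeas (m : ℕ)
    _ < ⊤ := ENNReal.sum_lt_top.2 fun m _ => key (m : ℕ) (Nat.lt_succ_iff.mp m.isLt)
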